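/- Existence of an error locator: let Ω be a P-closed set of rank n with P-basis B, and let G ∈ F_{q^m}[x;σ]_n with wt_Ω(G) ≤ t. Then there exists a nonzero skew polynomial L ∈ F_{q^m}[x;σ] with deg(L) ≤ t such that (L·G)(b) = 0 for all b ∈ Ω (equivalently, E_B(L·G) = 0). -/
import Mathlib


open Finset

/-- The `i`-th truncated norm `N_i(a) = σ^{i−1}(a)⋯σ(a)·a`. -/
def skewNorm {K : Type*} [Field K] (σ : K ≃+* K) (i : ℕ) (a : K) : K :=
  ∏ j ∈ Finset.range i, (σ ^ j) a

/-- Evaluation of a skew polynomial `F ∈ K[x;σ]` (encoded by its coefficients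
`F : ℕ →₀ K`) at `a`: the remainder of right division of `F` by `x − a`, given by
the closed formula `F(a) = Σᵢ Fᵢ · N_i(a)`. -/
noncomputable def skewEval {K : Type*} [Field K] (σ : K ≃+* K) (F : ℕ →₀ K) (a : K) : K :=
  F.sum fun i c => c * skewNorm σ i a

/-- Multiplication in the skew polynomial ring `K[x;σ]`, where `x·a = σ(a)·x`. -/
noncomputable def skewMul {K : Type*} [Field K] (σ : K ≃+* K) (U V : ℕ →₀ K) : ℕ →₀ K :=
  U.sum fun i a => V.sum fun j b => Finsupp.single (i + j) (a * (σ ^ i) b)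

/-- Degree of a skew polynomial encoded as `ℕ →₀ K` (with `deg 0 = 0` by convention). -/
def skewDeg {K : Type*} [Field K] (F : ℕ →₀ K) : ℕ := F.support.sup id

/-- `F` is the (monic) minimal skew polynomial of the set `Ω`: it is nonzero, monic,
vanishes on `Ω`, and has minimal degree among nonzero skew polynomials vanishing on `Ω`. -/
def IsMinSkewPoly {K : Type*} [Field K] (σ : K ≃+* K) (Ω : Set K) (F : ℕ →₀ K) : Prop :=
  F ≠ 0 ∧ F (skewDeg F) = 1 ∧ (∀ b ∈ Ω, skewEval σ F b = 0) ∧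
    ∀ G : ℕ →₀ K, G ≠ 0 → (∀ b ∈ Ω, skewEval σ G b = 0) → skewDeg F ≤ skewDeg G

/-- `a` is P-independent from the set `T`: some skew polynomial vanishing on `T` does not
vanish at `a` (equivalently, `a` is not in the P-closure of `T`). -/
def PIndepFrom {K : Type*} [Field K] (σ : K ≃+* K) (a : K) (T : Set K) : Prop :=
  ∃ F : ℕ →₀ K, (∀ b ∈ T, skewEval σ F b = 0) ∧ skewEval σ F a ≠ 0

/-- A set is P-independent if each of its elements is P-independent from the rest. -/
def PIndep {K : Type*} [Field K] (σ : K ≃+* K) (S : Set K) : Prop :=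
  ∀ a ∈ S, PIndepFrom σ a (S \ {a})

section A
variable {K : Type*} [Field K] (σ : K ≃+* K)

lemma skewNorm_succ (i : ℕ) (b : K) :
    skewNorm σ (i + 1) b = b * σ (skewNorm σ i b) := by
  have h : ∀ k : ℕ, (σ ^ (k + 1)) b = σ ((σ ^ k) b) := fun k => by rw [pow_succ']; rfl
  unfold skewNorm
  rw [Finset.prod_range_succ', map_prod, pow_zero]
  simp only [h]
  rw [mul_comm]
  rfl

lemma skewNorm_add (i j : ℕ) (b : K) :
    skewNorm σ (i + j) b = skewNorm σ i b * (σ ^ i) (skewNorm σ j b) := by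
  unfold skewNorm
  rw [Finset.prod_range_add, map_prod]
  congr 1
  refine Finset.prod_congr rfl fun k _ => ?_
  rw [pow_add]; rfl

lemma skewEval_eq_lm (F : ℕ →₀ K) (b : K) :
    skewEval σ F b = Finsupp.linearCombination K (fun i => skewNorm σ i b) F := by
  rw [Finsupp.linearCombination_apply]; rfl

lemma nvec_span_stable {S : Set K} {m : ℕ}
    (h : (fun b : S => skewNorm σ m (b : K)) ∈
      Submodule.span K (Set.range fun i : Fin m => fun b : S => skewNorm σ (i : ℕ) (b : K)))
    (j : ℕ) :
    (fun b : S => skewNorm σ j (b : K)) ∈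
      Submodule.span K (Set.range fun i : Fin m => fun b : S => skewNorm σ (i : ℕ) (b : K)) := by
  set P := Submodule.span K (Set.range fun i : Fin m => fun b : S => skewNorm σ (i : ℕ) (b : K))
    with hP
  have hT : ∀ w, w ∈ P → (fun b : S => (b : K) * σ (w b)) ∈ P := by
    intro w hw
    induction hw using Submodule.span_induction with
    | mem x hx =>
        obtain ⟨i, rfl⟩ := hx
        have he : (fun b : S => (b : K) * σ (skewNorm σ (i : ℕ) (b : K)))
            = fun b : S => skewNorm σ ((i : ℕ) + 1) (b : K) := by
          funext b; rw [skewNorm_succ]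
        rw [he]
        rcases lt_or_eq_of_le (Nat.succ_le_of_lt i.2) with hlt | heq
        · exact Submodule.subset_span ⟨⟨(i : ℕ) + 1, hlt⟩, rfl⟩
        · rw [show (i : ℕ) + 1 = m from heq]; exact h
    | zero =>
        have he : (fun b : S => (b : K) * σ ((0 : S → K) b)) = 0 := by
          funext b; simp
        rw [he]; exact P.zero_mem
    | add x y hx hy ihx ihy =>
        have he : (fun b : S => (b : K) * σ ((x + y) b))
            = (fun b : S => (b : K) * σ (x b)) + fun b : S => (b : K) * σ (y b) := by
          funext b; simp [mul_add]
        rw [he]; exact P.add_mem ihx ihy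
    | smul a x hx ihx =>
        have he : (fun b : S => (b : K) * σ ((a • x) b))
            = σ a • fun b : S => (b : K) * σ (x b) := by
          funext b; simp only [Pi.smul_apply, smul_eq_mul, map_mul]; ring
        rw [he]; exact P.smul_mem _ ihx
  induction j with
  | zero =>
      rcases Nat.eq_zero_or_pos m with hm | hm
      · subst hm; exact h
      · exact Submodule.subset_span ⟨⟨0, hm⟩, rfl⟩
  | succ j ih =>
      have := hT _ ih
      have he : (fun b : S => skewNorm σ (j + 1) (b : K))
          = fun b : S => (b : K) * σ (skewNorm σ j (b : K)) := by
        funext b; rw [skewNorm_succ]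
      rw [he]; exact this

lemma nvec_deg_mem_span {S : Set K} {F : ℕ →₀ K} {d : ℕ} (hd : skewDeg F = d)
    (hF1 : F d = 1) (hvan : ∀ b ∈ S, skewEval σ F b = 0) :
    (fun b : S => skewNorm σ d (b : K)) ∈
      Submodule.span K (Set.range fun i : Fin d => fun b : S => skewNorm σ (i : ℕ) (b : K)) := by
  have hdsupp : d ∈ F.support := Finsupp.mem_support_iff.2 (by rw [hF1]; exact one_ne_zero)
  have key : (fun b : S => skewNorm σ d (b : K))
      = -∑ i ∈ F.support.erase d, F i • (fun b : S => skewNorm σ i (b : K)) := by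
    funext b
    have h0 : ∑ i ∈ F.support, F i * skewNorm σ i (b : K) = 0 := hvan b b.2
    rw [← Finset.add_sum_erase _ _ hdsupp, hF1, one_mul] at h0
    simp only [Pi.neg_apply, Finset.sum_apply, Pi.smul_apply, smul_eq_mul]
    exact eq_neg_of_add_eq_zero_left h0
  rw [key]
  refine Submodule.neg_mem _ (Submodule.sum_mem _ fun i hi => ?_)
  have hile : i ≤ d := by
    rw [← hd]; exact Finset.le_sup (f := id) (Finset.mem_of_mem_erase hi)
  have hilt : i < d := lt_of_le_of_ne hile (Finset.ne_of_mem_erase hi)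
  exact Submodule.smul_mem _ _ (Submodule.subset_span ⟨⟨i, hilt⟩, rfl⟩)

lemma finsum_single_apply {m : ℕ} (c : Fin m → K) (i₀ : Fin m) :
    (∑ i : Fin m, Finsupp.single (i : ℕ) (c i)) (i₀ : ℕ) = c i₀ := by
  rw [Finsupp.finset_sum_apply]
  rw [Finset.sum_eq_single i₀]
  · simp
  · intro i _ hne
    rw [Finsupp.single_apply, if_neg (fun h => hne (Fin.val_injective h))]
  · intro h; exact absurd (Finset.mem_univ i₀) h

lemma finsum_single_support {m : ℕ} (c : Fin m → K) :
    (∑ i : Fin m, Finsupp.single (i : ℕ) (c i)).support ⊆ Finset.range m := by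
  refine subset_trans Finsupp.support_finset_sum ?_
  intro j hj
  simp only [Finset.mem_biUnion] at hj
  obtain ⟨i, _, hji⟩ := hj
  have := Finsupp.support_single_subset hji
  simp only [Finset.mem_singleton] at this
  subst this
  exact Finset.mem_range.2 i.2

lemma skewEval_finsum {m : ℕ} (c : Fin m → K) (b : K) :
    skewEval σ (∑ i : Fin m, Finsupp.single (i : ℕ) (c i)) b
      = ∑ i : Fin m, c i * skewNorm σ (i : ℕ) b := by
  rw [skewEval_eq_lm, map_sum]
  refine Finset.sum_congr rfl fun i _ => ?_
  rw [Finsupp.linearCombination_single]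
  rfl

lemma nvec_linearIndependent {S : Set K} {F : ℕ →₀ K}
    (hmin : ∀ G : ℕ →₀ K, G ≠ 0 → (∀ b ∈ S, skewEval σ G b = 0) → skewDeg F ≤ skewDeg G) :
    LinearIndependent K (fun i : Fin (skewDeg F) => fun b : S => skewNorm σ (i : ℕ) (b : K)) := by
  rw [Fintype.linearIndependent_iff]
  intro c hc
  by_contra hne
  push_neg at hne
  obtain ⟨i₀, hi₀⟩ := hne
  set L : ℕ →₀ K := ∑ i : Fin (skewDeg F), Finsupp.single (i : ℕ) (c i) with hL
  have hLi₀ : L (i₀ : ℕ) = c i₀ := finsum_single_apply c i₀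
  have hL0 : L ≠ 0 := fun h => hi₀ (by rw [← hLi₀, h]; rfl)
  have hvan : ∀ b ∈ S, skewEval σ L b = 0 := by
    intro b hb
    rw [hL, skewEval_finsum]
    have := congrFun hc ⟨b, hb⟩
    simpa using this
  have hdle : skewDeg F ≤ skewDeg L := hmin L hL0 hvan
  have hlt : skewDeg L < skewDeg F := by
    have hpos : (0 : ℕ) < skewDeg F := i₀.pos
    refine (Finset.sup_lt_iff (by simpa using hpos)).2 fun j hj => ?_
    have := finsum_single_support c hj
    simpa using this
  omega

lemma skewEval_skewMul (L G : ℕ →₀ K) (b : K) :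
    skewEval σ (skewMul σ L G) b
      = ∑ i ∈ L.support, L i * (skewNorm σ i b * (σ ^ i) (skewEval σ G b)) := by
  rw [skewEval_eq_lm, skewMul, Finsupp.sum, map_sum]
  refine Finset.sum_congr rfl fun i _ => ?_
  rw [Finsupp.sum, map_sum]
  have hG : (σ ^ i) (skewEval σ G b)
      = ∑ j ∈ G.support, (σ ^ i) (G j) * (σ ^ i) (skewNorm σ j b) := by
    rw [skewEval, Finsupp.sum, map_sum]
    exact Finset.sum_congr rfl fun j _ => map_mul _ _ _
  rw [hG, Finset.mul_sum, Finset.mul_sum]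
  refine Finset.sum_congr rfl fun j _ => ?_
  rw [Finsupp.linearCombination_single, smul_eq_mul, skewNorm_add]
  ring

end A

set_option maxHeartbeats 1000000 in
set_option synthInstance.maxHeartbeats 400000 in
theorem error_locator_exists' {K : Type*} [Field K] [Fintype K] (σ : K ≃+* K)
    (Ω : Set K) (FΩ : ℕ →₀ K) (hFΩ1 : FΩ (skewDeg FΩ) = 1)
    (hFΩv : ∀ b ∈ Ω, skewEval σ FΩ b = 0)
    (n : ℕ) (hn : skewDeg FΩ = n)
    (G : ℕ →₀ K) (t : ℕ)
    (FZ : ℕ →₀ K)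
    (hFZmin : ∀ H : ℕ →₀ K, H ≠ 0 →
      (∀ b ∈ {a | a ∈ Ω ∧ skewEval σ G a = 0}, skewEval σ H b = 0) → skewDeg FZ ≤ skewDeg H)
    (hkt : n - skewDeg FZ ≤ t) :
    ∃ L : ℕ →₀ K, L ≠ 0 ∧ (∀ i, t < i → L i = 0) ∧
      ∀ b ∈ Ω, skewEval σ (skewMul σ L G) b = 0 := by
  classical
  set Z : Set K := {a | a ∈ Ω ∧ skewEval σ G a = 0} with hZdef
  set k : ℕ := skewDeg FZ with hk
  haveI : Fintype Ω := (Set.toFinite Ω).fintype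
  haveI : Fintype Z := (Set.toFinite Z).fintype
  set v : ℕ → (Ω → K) := fun i => fun b : Ω => skewNorm σ i (b : K) with hv
  set u : ℕ → (Ω → K) :=
    fun i => fun b : Ω => skewNorm σ i (b : K) * (σ ^ i) (skewEval σ G (b : K)) with hu
  set V : Submodule K (Ω → K) := Submodule.span K (Set.range fun i : Fin n => v (i : ℕ)) with hV
  have hZΩ : Z ⊆ Ω := fun a ha => ha.1
  set ρ : (Ω → K) →ₗ[K] (Z → K) := LinearMap.funLeft K K (Set.inclusion hZΩ) with hρ
  -- all norm vectors lie in V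
  have hvmem : ∀ j, v j ∈ V := by
    intro j
    have h1 : FΩ n = 1 := by rw [← hn]; exact hFΩ1
    have h0 := nvec_deg_mem_span σ (S := Ω) hn h1 hFΩv
    exact nvec_span_stable σ h0 j
  have humem : ∀ i, u i ∈ V := by
    intro i
    have he : u i = ∑ j ∈ G.support, (σ ^ i) (G j) • v (i + j) := by
      funext b
      simp only [hu, hv, Finset.sum_apply, Pi.smul_apply, smul_eq_mul]
      rw [skewEval, Finsupp.sum, map_sum, Finset.mul_sum]
      refine Finset.sum_congr rfl fun j _ => ?_
      rw [skewNorm_add, map_mul]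
      ring
    rw [he]
    exact Submodule.sum_mem _ fun j _ => Submodule.smul_mem _ _ (hvmem _)
  have huker : ∀ i, u i ∈ LinearMap.ker ρ := by
    intro i
    rw [LinearMap.mem_ker]
    funext z
    have hz : skewEval σ G (z : K) = 0 := z.2.2
    simp only [hρ, LinearMap.funLeft_apply, hu]
    show skewNorm σ i ((Set.inclusion hZΩ z : Ω) : K) * (σ ^ i) (skewEval σ G _) = _
    simp [hz]
  set W : Submodule K (Ω → K) := V ⊓ LinearMap.ker ρ with hW
  -- finrank computations
  have hVfin : Module.finrank K V ≤ n := by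
    haveI F1 : Fintype ↑(Set.range fun i : Fin n => v (i : ℕ)) :=
      (Set.finite_range (fun i : Fin n => v (i : ℕ))).fintype
    have := @finrank_span_le_card K _ _ _ _ _
      (Set.range fun i : Fin n => v (i : ℕ)) F1
    refine le_trans this ?_
    rw [Set.toFinset_card]
    have h2 := Fintype.card_range_le (fun i : Fin n => v (i : ℕ))
    simpa using h2
  have hzind : LinearIndependent K (fun i : Fin k => fun b : Z => skewNorm σ (i : ℕ) (b : K)) :=
    nvec_linearIndependent σ hFZmin
  have hρv : ∀ i : ℕ, ρ (v i) = fun b : Z => skewNorm σ i (b : K) := by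
    intro i; funext z; rfl
  have hmapk : k ≤ Module.finrank K (Submodule.map ρ V) := by
    have h1 : Submodule.span K
        (Set.range fun i : Fin k => fun b : Z => skewNorm σ (i : ℕ) (b : K))
        ≤ Submodule.map ρ V := by
      rw [Submodule.span_le]
      rintro _ ⟨i, rfl⟩
      exact ⟨v (i : ℕ), hvmem _, hρv _⟩
    have h2 := Submodule.finrank_mono h1
    rw [finrank_span_eq_card hzind, Fintype.card_fin] at h2
    exact h2
  have hrn := LinearMap.finrank_range_add_finrank_ker (ρ.domRestrict V)
  rw [LinearMap.range_domRestrict, LinearMap.ker_domRestrict] at hrn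
  have hcomap : Submodule.comap V.subtype (LinearMap.ker ρ) = Submodule.comap V.subtype W := by
    rw [hW, Submodule.comap_inf]
    rw [Submodule.comap_subtype_self]
    rw [top_inf_eq]
  have hWeq : Module.finrank K (Submodule.comap V.subtype (LinearMap.ker ρ))
      = Module.finrank K W := by
    rw [hcomap]
    exact (Submodule.comapSubtypeEquivOfLe (inf_le_left : W ≤ V)).finrank_eq
  have hWr : Module.finrank K W ≤ t := by
    rw [hWeq] at hrn
    omega
  -- dependence of u 0 .. u t
  have hdep : ¬ LinearIndependent K (fun i : Fin (t + 1) => u (i : ℕ)) := by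
    intro hind
    have h1 : Submodule.span K (Set.range fun i : Fin (t + 1) => u (i : ℕ)) ≤ W := by
      rw [Submodule.span_le]
      rintro _ ⟨i, rfl⟩
      exact ⟨humem _, huker _⟩
    have h2 := Submodule.finrank_mono h1
    rw [finrank_span_eq_card hind, Fintype.card_fin] at h2
    omega
  obtain ⟨c, hc, i₀, hi₀⟩ := Fintype.not_linearIndependent_iff.1 hdep
  set L : ℕ →₀ K := ∑ i : Fin (t + 1), Finsupp.single (i : ℕ) (c i) with hL
  have hLc : ∀ i : Fin (t + 1), L (i : ℕ) = c i := fun i => finsum_single_apply c i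
  refine ⟨L, ?_, ?_, ?_⟩
  · intro h
    exact hi₀ (by rw [← hLc i₀, h]; rfl)
  · intro i hti
    by_contra hne
    have := finsum_single_support c (Finsupp.mem_support_iff.2 hne)
    rw [Finset.mem_range] at this
    omega
  · intro b hb
    rw [skewEval_skewMul]
    have hsupp : L.support ⊆ Finset.range (t + 1) := finsum_single_support c
    rw [Finset.sum_subset hsupp (fun i _ hi => by
      rw [Finsupp.notMem_support_iff.1 hi, zero_mul])]
    have hcb := congrFun hc ⟨b, hb⟩
    simp only [Finset.sum_apply, Pi.smul_apply, smul_eq_mul, Pi.zero_apply] at hcb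
    rw [Finset.sum_range fun i => L i * (skewNorm σ i b * (σ ^ i) (skewEval σ G b))]
    rw [← hcb]
    refine Finset.sum_congr rfl fun i _ => ?_
    rw [hLc i, hu]

/-- Existence of an error locator: let `Ω` be a P-closed set of rank `n` and
`G` a skew polynomial of degree `< n` with skew weight
`wt_Ω(G) = n − Rk(Z(G) ∩ Ω) ≤ t`.  Then there is a nonzero skew polynomial `L` of
degree at most `t` such that `(L·G)(b) = 0` for all `b ∈ Ω`. -/
theorem error_locator_exists {K : Type*} [Field K] [Fintype K] (σ : K ≃+* K)
    (Ω : Set K) (FΩ : ℕ →₀ K) (hFΩ : IsMinSkewPoly σ Ω FΩ)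
    (hclosed : Ω = {a | skewEval σ FΩ a = 0})
    (n : ℕ) (hn : skewDeg FΩ = n)
    (G : ℕ →₀ K) (hdegG : ∀ i, n ≤ i → G i = 0) (t : ℕ)
    (hwt : ∃ FZ : ℕ →₀ K,
      IsMinSkewPoly σ {a | a ∈ Ω ∧ skewEval σ G a = 0} FZ ∧ n - skewDeg FZ ≤ t) :
    ∃ L : ℕ →₀ K, L ≠ 0 ∧ (∀ i, t < i → L i = 0) ∧
      ∀ b ∈ Ω, skewEval σ (skewMul σ L G) b = 0 := by
  obtain ⟨FZ, hFZ, hkt⟩ := hwt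
  exact error_locator_exists' σ Ω FΩ hFΩ.2.1 hFΩ.2.2.1 n hn G t FZ hFZ.2.2.2 hkt
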